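/- arXiv:0709.2216 — 3 statements merged into one kernel-verified Lean document; each statement's English description precedes it below -/
import Mathlib

section
/- Let (Ω, F) be a measurable space equipped with a filtration (G_n)_{n∈ℕ} of sub-σ-algebras of F, and let G_∞ = ⨆_{n} G_n. Let P and Q be probability measures on (Ω, F) such that the restriction of P to G_∞ is absolutely continuous with respect to the restriction of Q to G_∞. Let K ≥ 0 and let (ξ_n)_{n∈ℕ} be a family of G_∞-measurable real-valued random variables with |ξ_n(ω)| ≤ K for all n and ω. Then E_P[ |E_P[ξ_n | G_n] − E_Q[ξ_n | G_n]| ] → 0 as n → ∞, where E_P[· | G_n] and E_Q[· | G_n] denote conditional expectation with respect to the measures P and Q respectively. -/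
open MeasureTheory Filter Topology

private lemma pullout_integral {Ω : Type*} {m m0 : MeasurableSpace Ω} (hm : m ≤ m0)
    {μ : Measure Ω} [IsFiniteMeasure μ] {s g : Ω → ℝ}
    (hs : StronglyMeasurable[m] s) (hg : Integrable g μ)
    (hsg : Integrable (fun ω => s ω * g ω) μ) :
    ∫ ω, s ω * g ω ∂μ = ∫ ω, s ω * (μ[g|m]) ω ∂μ := by
  have hsg' : Integrable (s * g) μ := hsg
  have h : μ[s * g|m] =ᵐ[μ] s * μ[g|m] := condExp_mul_of_stronglyMeasurable_left hs hsg' hg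
  calc ∫ ω, s ω * g ω ∂μ = ∫ ω, (μ[s * g|m]) ω ∂μ := (integral_condExp hm).symm
    _ = ∫ ω, s ω * (μ[g|m]) ω ∂μ := integral_congr_ae (h.mono fun ω hω => by simpa using hω)

/-- **Stability of filtered estimates of bounded tail-measurable random variables.**
If the restrictions of `P` and `Q` to `G∞ = ⨆ n, G n` are absolutely continuous and
`ξ n` are uniformly bounded `G∞`-measurable random variables, then
`E_P |E_P[ξ n | G n] − E_Q[ξ n | G n]| → 0`. -/
theorem filter_stability_of_absolutelyContinuous
    {Ω : Type*} {m0 : MeasurableSpace Ω} (G : Filtration ℕ m0)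
    (P Q : Measure Ω) [IsProbabilityMeasure P] [IsProbabilityMeasure Q]
    (hac : P.trim (iSup_le fun n => G.le n : (⨆ n, (G n : MeasurableSpace Ω)) ≤ m0) ≪
      Q.trim (iSup_le fun n => G.le n : (⨆ n, (G n : MeasurableSpace Ω)) ≤ m0))
    (K : ℝ) (hK : 0 ≤ K) (ξ : ℕ → Ω → ℝ)
    (hmeas : ∀ n, StronglyMeasurable[⨆ i, (G i : MeasurableSpace Ω)] (ξ n))
    (hbound : ∀ n ω, |ξ n ω| ≤ K) :
    Tendsto (fun n => ∫ ω, |(P[ξ n | G n]) ω - (Q[ξ n | G n]) ω| ∂P) atTop (nhds 0) := by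
  classical
  have hle : (⨆ n, (G n : MeasurableSpace Ω)) ≤ m0 := iSup_le fun n => G.le n
  set mi : MeasurableSpace Ω := ⨆ n, (G n : MeasurableSpace Ω) with hmi_def
  set Pt : @Measure Ω mi := P.trim hle with hPt_def
  set Qt : @Measure Ω mi := Q.trim hle with hQt_def
  have hac' : Pt ≪ Qt := hac
  set Z : Ω → ℝ := fun ω => (Pt.rnDeriv Qt ω).toReal with hZ_def
  have hZsm : StronglyMeasurable[mi] Z :=
    (Measure.measurable_rnDeriv Pt Qt).ennreal_toReal.stronglyMeasurable
  have hZ0 : ∀ ω, 0 ≤ Z ω := fun ω => ENNReal.toReal_nonneg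
  have hZintQt : Integrable Z Qt := Measure.integrable_toReal_rnDeriv
  have hZintQ : Integrable Z Q := integrable_of_integrable_trim hle hZintQt
  -- transfer of integrals from P to Q
  have hPQ : ∀ h : Ω → ℝ, StronglyMeasurable[mi] h →
      ∫ ω, h ω ∂P = ∫ ω, Z ω * h ω ∂Q := by
    intro h hh
    have h1 : ∫ ω, h ω ∂P = ∫ ω, h ω ∂Pt := integral_trim hle hh
    have h3 : ∫ ω, Z ω * h ω ∂Qt = ∫ ω, h ω ∂Pt := by
      have := MeasureTheory.integral_rnDeriv_smul (f := h) hac'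
      simpa only [smul_eq_mul] using this
    have h2 : ∫ ω, Z ω * h ω ∂Qt = ∫ ω, Z ω * h ω ∂Q :=
      (integral_trim hle (hZsm.mul hh)).symm
    rw [h1, ← h3, h2]
  -- transfer of null sets from Q to P
  have hnull : ∀ {A : Set Ω}, MeasurableSet[mi] A → Q A = 0 → P A = 0 := by
    intro A hA hQA
    have h1 : Qt A = 0 := by
      rw [hQt_def, trim_measurableSet_eq hle hA]; exact hQA
    have h2 : Pt A = 0 := hac' h1
    rw [← trim_measurableSet_eq hle hA]; exact h2
  -- integrability of ξ n
  have hξP : ∀ n, Integrable (ξ n) P := fun n =>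
    (integrable_const K).mono' ((hmeas n).mono hle).aestronglyMeasurable
      (Eventually.of_forall fun ω => by simpa [Real.norm_eq_abs] using hbound n ω)
  have hξQ : ∀ n, Integrable (ξ n) Q := fun n =>
    (integrable_const K).mono' ((hmeas n).mono hle).aestronglyMeasurable
      (Eventually.of_forall fun ω => by simpa [Real.norm_eq_abs] using hbound n ω)
  -- the key bound
  have key : ∀ n, ∫ ω, |(P[ξ n | G n]) ω - (Q[ξ n | G n]) ω| ∂P
      ≤ K * ∫ ω, |Z ω - (Q[Z|G n]) ω| ∂Q := by
    intro n
    set f : Ω → ℝ := P[ξ n | G n] with hf_def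
    set g : Ω → ℝ := Q[ξ n | G n] with hg_def
    set Zn : Ω → ℝ := Q[Z|G n] with hZn_def
    have hfm : StronglyMeasurable[G n] f := stronglyMeasurable_condExp
    have hgm : StronglyMeasurable[G n] g := stronglyMeasurable_condExp
    have hZnm : StronglyMeasurable[G n] Zn := stronglyMeasurable_condExp
    have hZnintQ : Integrable Zn Q := integrable_condExp
    have hGle : (G n : MeasurableSpace Ω) ≤ mi :=
      le_iSup (fun k => (G k : MeasurableSpace Ω)) n
    -- sign function
    set s : Ω → ℝ := fun ω => if f ω - g ω < 0 then (-1 : ℝ) else 1 with hs_def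
    have hsm : StronglyMeasurable[G n] s := by
      refine Measurable.stronglyMeasurable (Measurable.ite ?_ measurable_const measurable_const)
      exact measurableSet_lt (hfm.measurable.sub hgm.measurable) measurable_const
    have hs1 : ∀ ω, |s ω| = 1 := by
      intro ω; by_cases h : f ω - g ω < 0
      · simp only [hs_def, if_pos h]; norm_num
      · simp only [hs_def, if_neg h]; norm_num
    have hsabs : ∀ ω, s ω * (f ω - g ω) = |f ω - g ω| := by
      intro ω; by_cases h : f ω - g ω < 0
      · simp only [hs_def, if_pos h, abs_of_neg h]; ring
      · simp only [hs_def, if_neg h, abs_of_nonneg (not_lt.1 h)]; ring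
    -- bounds on conditional expectations
    have hfbd : ∀ᵐ ω ∂P, |f ω| ≤ K := by
      have := ae_bdd_condExp_of_ae_bdd (μ := P) (m := G n) (R := ⟨K, hK⟩)
        (Eventually.of_forall fun ω => by exact hbound n ω)
      exact this
    have hgbdQ : ∀ᵐ ω ∂Q, |g ω| ≤ K := by
      have := ae_bdd_condExp_of_ae_bdd (μ := Q) (m := G n) (R := ⟨K, hK⟩)
        (Eventually.of_forall fun ω => by exact hbound n ω)
      exact this
    have hgbdP : ∀ᵐ ω ∂P, |g ω| ≤ K := by
      have hsR : MeasurableSet {x : ℝ | ¬ |x| ≤ K} :=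
        (measurableSet_le measurable_abs measurable_const).compl
      have h' : MeasurableSet[G n] {ω | ¬ |g ω| ≤ K} := hgm.measurable hsR
      have hA : MeasurableSet[mi] {ω | ¬ |g ω| ≤ K} := hGle _ h'
      rw [ae_iff]
      refine hnull hA ?_
      have := hgbdQ; rw [ae_iff] at this; exact this
    -- integrabilities
    have hsξP : Integrable (fun ω => s ω * ξ n ω) P :=
      (integrable_const K).mono'
        (((hsm.mono (hGle.trans hle)).mul ((hmeas n).mono hle)).aestronglyMeasurable)
        (Eventually.of_forall fun ω => by
          simp only [Real.norm_eq_abs, abs_mul, hs1 ω, one_mul]; exact hbound n ω)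
    have hsfP : Integrable (fun ω => s ω * f ω) P :=
      (integrable_const K).mono'
        (((hsm.mono (hGle.trans hle)).mul (hfm.mono (G.le n))).aestronglyMeasurable)
        (hfbd.mono fun ω hω => by
          simp only [Real.norm_eq_abs, abs_mul, hs1 ω, one_mul]; exact hω)
    have hsgP : Integrable (fun ω => s ω * g ω) P :=
      (integrable_const K).mono'
        (((hsm.mono (hGle.trans hle)).mul (hgm.mono (G.le n))).aestronglyMeasurable)
        (hgbdP.mono fun ω hω => by
          simp only [Real.norm_eq_abs, abs_mul, hs1 ω, one_mul]; exact hω)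
    have hZm0 : AEStronglyMeasurable[m0] Z Q := (hZsm.mono hle).aestronglyMeasurable
    have hZsξQ : Integrable (fun ω => Z ω * (s ω * ξ n ω)) Q :=
      (hZintQ.const_mul K).mono'
        ((hZsm.mono hle).aestronglyMeasurable.mul
          (((hsm.mono (hGle.trans hle)).mul ((hmeas n).mono hle)).aestronglyMeasurable))
        (Eventually.of_forall fun ω => by
          have : |Z ω * (s ω * ξ n ω)| = Z ω * |ξ n ω| := by
            rw [abs_mul, abs_mul, hs1 ω, one_mul, abs_of_nonneg (hZ0 ω)]
          rw [Real.norm_eq_abs, this, mul_comm (K : ℝ) (Z ω)]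
          exact mul_le_mul_of_nonneg_left (hbound n ω) (hZ0 ω))
    have hsgZQ : Integrable (fun ω => (s ω * g ω) * Z ω) Q :=
      (hZintQ.const_mul K).mono'
        ((((hsm.mono (hGle.trans hle)).mul (hgm.mono (G.le n))).aestronglyMeasurable).mul
          (hZsm.mono hle).aestronglyMeasurable)
        (hgbdQ.mono fun ω hω => by
          have : |s ω * g ω * Z ω| = |g ω| * Z ω := by
            rw [abs_mul, abs_mul, hs1 ω, one_mul, abs_of_nonneg (hZ0 ω)]
          rw [Real.norm_eq_abs, this]
          exact mul_le_mul_of_nonneg_right hω (hZ0 ω))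
    have hZnsξQ : Integrable (fun ω => (Zn ω * s ω) * ξ n ω) Q :=
      (hZnintQ.abs.const_mul K).mono'
        ((((hZnm.mono (G.le n)).mul (hsm.mono (G.le n))).aestronglyMeasurable).mul
          ((hmeas n).mono hle).aestronglyMeasurable)
        (Eventually.of_forall fun ω => by
          have : |Zn ω * s ω * ξ n ω| = |Zn ω| * |ξ n ω| := by
            rw [abs_mul, abs_mul, hs1 ω, mul_one]
          rw [Real.norm_eq_abs, this, mul_comm (K : ℝ) |Zn ω|]
          exact mul_le_mul_of_nonneg_left (hbound n ω) (abs_nonneg _))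
    -- chain of equalities
    have E1 : ∫ ω, s ω * f ω ∂P = ∫ ω, s ω * ξ n ω ∂P := by
      rw [hf_def]
      exact (pullout_integral (G.le n) hsm (hξP n) hsξP).symm
    have E2 : ∫ ω, s ω * ξ n ω ∂P = ∫ ω, Z ω * (s ω * ξ n ω) ∂Q :=
      hPQ _ ((hsm.mono hGle).mul (hmeas n))
    have E3 : ∫ ω, s ω * g ω ∂P = ∫ ω, Z ω * (s ω * g ω) ∂Q :=
      hPQ _ ((hsm.mono hGle).mul (hgm.mono hGle))
    have E4 : ∫ ω, Z ω * (s ω * g ω) ∂Q = ∫ ω, (s ω * g ω) * Zn ω ∂Q := by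
      have := pullout_integral (G.le n) (hsm.mul hgm) hZintQ hsgZQ
      simp only [Pi.mul_apply] at this
      rw [← hZn_def] at this
      rw [← this]
      exact integral_congr_ae (Eventually.of_forall fun ω => by ring)
    have E5 : ∫ ω, (Zn ω * s ω) * ξ n ω ∂Q = ∫ ω, (s ω * g ω) * Zn ω ∂Q := by
      have := pullout_integral (G.le n) (hZnm.mul hsm) (hξQ n) hZnsξQ
      simp only [Pi.mul_apply] at this
      rw [← hg_def] at this
      rw [this]
      exact integral_congr_ae (Eventually.of_forall fun ω => by ring)
    -- put together
    have hA : ∫ ω, |f ω - g ω| ∂P = ∫ ω, (Z ω - Zn ω) * (s ω * ξ n ω) ∂Q := by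
      calc ∫ ω, |f ω - g ω| ∂P = ∫ ω, (s ω * f ω - s ω * g ω) ∂P := by
            refine integral_congr_ae (Eventually.of_forall fun ω => ?_)
            show |f ω - g ω| = s ω * f ω - s ω * g ω
            rw [← hsabs ω]; ring
        _ = ∫ ω, s ω * f ω ∂P - ∫ ω, s ω * g ω ∂P := integral_sub hsfP hsgP
        _ = ∫ ω, Z ω * (s ω * ξ n ω) ∂Q - ∫ ω, (s ω * g ω) * Zn ω ∂Q := by
            rw [E1, E2, E3, E4]
        _ = ∫ ω, Z ω * (s ω * ξ n ω) ∂Q - ∫ ω, (Zn ω * s ω) * ξ n ω ∂Q := by rw [E5]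
        _ = ∫ ω, (Z ω * (s ω * ξ n ω) - (Zn ω * s ω) * ξ n ω) ∂Q :=
            (integral_sub hZsξQ hZnsξQ).symm
        _ = ∫ ω, (Z ω - Zn ω) * (s ω * ξ n ω) ∂Q := by
            refine integral_congr_ae (Eventually.of_forall fun ω => ?_)
            ring
    rw [hA]
    have hintR : Integrable (fun ω => |Z ω - Zn ω| * K) Q :=
      ((hZintQ.sub hZnintQ).abs).mul_const K
    have hintL : Integrable (fun ω => (Z ω - Zn ω) * (s ω * ξ n ω)) Q := by
      have := hZsξQ.sub hZnsξQ
      refine this.congr (Eventually.of_forall fun ω => ?_)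
      simp only [Pi.sub_apply]; ring
    calc ∫ ω, (Z ω - Zn ω) * (s ω * ξ n ω) ∂Q
        ≤ ∫ ω, |Z ω - Zn ω| * K ∂Q := by
          refine integral_mono hintL hintR fun ω => ?_
          calc (Z ω - Zn ω) * (s ω * ξ n ω) ≤ |(Z ω - Zn ω) * (s ω * ξ n ω)| := le_abs_self _
            _ = |Z ω - Zn ω| * |ξ n ω| := by rw [abs_mul, abs_mul, hs1 ω, one_mul]
            _ ≤ |Z ω - Zn ω| * K := mul_le_mul_of_nonneg_left (hbound n ω) (abs_nonneg _)
      _ = K * ∫ ω, |Z ω - Zn ω| ∂Q := by rw [integral_mul_const, mul_comm]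
  -- Lévy's upward theorem
  have hlevy : Tendsto (fun n => eLpNorm (Q[Z|G n] - Z) 1 Q) atTop (𝓝 0) :=
    hZintQ.tendsto_eLpNorm_condExp hZsm
  have hconv : ∀ n, ∫ ω, |Z ω - (Q[Z|G n]) ω| ∂Q = (eLpNorm (Q[Z|G n] - Z) 1 Q).toReal := by
    intro n
    rw [eLpNorm_one_eq_lintegral_enorm,
      ← integral_norm_eq_lintegral_enorm
        ((stronglyMeasurable_condExp.mono (G.le n)).sub (hZsm.mono hle)).aestronglyMeasurable]
    refine integral_congr_ae (Eventually.of_forall fun ω => ?_)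
    simp [Real.norm_eq_abs, abs_sub_comm]
  have htend : Tendsto (fun n => K * ∫ ω, |Z ω - (Q[Z|G n]) ω| ∂Q) atTop (𝓝 0) := by
    have h1 : Tendsto (fun n => (eLpNorm (Q[Z|G n] - Z) 1 Q).toReal) atTop (𝓝 0) := by
      have := (ENNReal.tendsto_toReal (a := 0) (by simp)).comp hlevy
      simpa [Function.comp_def] using this
    have := h1.const_mul K
    rw [mul_zero] at this
    refine this.congr fun n => ?_
    rw [hconv n]
  exact squeeze_zero (fun n => integral_nonneg fun ω => abs_nonneg _) key htend
end

section
/- Let A be a unital C*-algebra over ℂ with state space S (the set of continuous linear functionals φ : A → ℂ with φ(1) = 1 and φ(x* x) real and nonnegative for all x), equipped with the weak-* topology and its Borel σ-algebra. Let μ₁, μ₂ be Borel probability measures on S, and let ρ₁, ρ₂ be states that are the barycenters of μ₁, μ₂ respectively, i.e. ρᵢ(X) = ∫_S φ(X) dμᵢ(φ) for all X ∈ A. Assume μ₁ is absolutely continuous with respect to μ₂. Then for every sequence (X_n) in A such that ρ₁((X_m − X_n)*(X_m − X_n)) → 0 as m, n → ∞ (i.e. for every ε > 0 there is N with ρ₁((X_m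 − X_n)*(X_m − X_n)) < ε for all m, n ≥ N), the following holds: if ρ₂(X_n* X_n) → 0 as n → ∞, then ρ₁(X_n* X_n) → 0 as n → ∞. -/
open MeasureTheory Filter
open scoped Topology
open scoped ComplexOrder

/-- The state space of a (unital, star, topological) complex algebra: the set of
continuous linear functionals `φ` (with the weak-* topology inherited from
`WeakDual ℂ A`) satisfying `φ 1 = 1` and `φ (x* x)` real and nonnegative. -/
def StateSpace (A : Type*) [Ring A] [StarRing A] [Module ℂ A] [TopologicalSpace A] :
    Set (WeakDual ℂ A) :=
  {φ | φ 1 = 1 ∧ ∀ x : A, 0 ≤ φ (star x * x)}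

/-- The Borel σ-algebra of the weak-* topology on the state space. -/
noncomputable instance StateSpace.instMeasurableSpace (A : Type*) [Ring A] [StarRing A]
    [Module ℂ A] [TopologicalSpace A] : MeasurableSpace ↥(StateSpace A) :=
  borel _

instance StateSpace.instBorelSpace (A : Type*) [Ring A] [StarRing A]
    [Module ℂ A] [TopologicalSpace A] : BorelSpace ↥(StateSpace A) :=
  ⟨rfl⟩



section Aux
set_option linter.unusedSectionVars false
variable {A : Type*} [NormedRing A] [StarRing A] [CStarRing A]
    [NormedAlgebra ℂ A] [StarModule ℂ A] [CompleteSpace A]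

lemma state_im_eq_zero (ψ : WeakDual ℂ A) (hψ : ∀ x : A, 0 ≤ ψ (star x * x)) (x : A) :
    (ψ (star x * x)).im = 0 := by
  have h := hψ x; rw [Complex.le_def] at h; simpa using h.2.symm

lemma state_conj_symm (ψ : WeakDual ℂ A) (hψ : ∀ x : A, 0 ≤ ψ (star x * x)) (x y : A) :
    (starRingEnd ℂ) (ψ (star y * x)) = ψ (star x * y) := by
  have hconj : ∀ z : A, (starRingEnd ℂ) (ψ (star z * z)) = ψ (star z * z) := fun z =>
    Complex.conj_eq_iff_im.mpr (state_im_eq_zero ψ hψ z)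
  have e1 : star (x + y) * (x + y)
      = star x * x + (star x * y + (star y * x + star y * y)) := by
    simp only [star_add]; noncomm_ring
  have e2 : star (x + Complex.I • y) * (x + Complex.I • y)
      = star x * x + (Complex.I • (star x * y) + ((-Complex.I) • (star y * x) + star y * y)) := by
    simp only [star_add, star_smul, Complex.star_def, Complex.conj_I, add_mul, mul_add,
      smul_mul_assoc, mul_smul_comm, smul_smul, smul_add, smul_neg, neg_smul, neg_mul,
      Complex.I_mul_I, neg_neg, one_smul]
    abel
  have C1 := hconj (x + y)
  rw [e1] at C1
  simp only [map_add, hconj x, hconj y] at C1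
  have C2 := hconj (x + Complex.I • y)
  rw [e2] at C2
  simp only [map_add, _root_.map_smul, smul_eq_mul, map_mul, map_neg, Complex.conj_I,
    hconj x, hconj y] at C2
  set u := ψ (star x * y)
  set v := ψ (star y * x)
  have C2' : (starRingEnd ℂ) v - (starRingEnd ℂ) u = u - v := by
    apply mul_left_cancel₀ Complex.I_ne_zero
    linear_combination C2
  linear_combination (C1 + C2') / 2

end Aux

section Aux2
set_option linter.unusedSectionVars false
variable {A : Type*} [NormedRing A] [StarRing A] [CStarRing A]
    [NormedAlgebra ℂ A] [StarModule ℂ A] [CompleteSpace A]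

lemma state_cauchy_schwarz (ψ : WeakDual ℂ A) (hψ : ∀ x : A, 0 ≤ ψ (star x * x)) (x y : A) :
    ‖ψ (star x * y)‖ ^ 2 ≤ (ψ (star x * x)).re * (ψ (star y * y)).re := by
  letI c : PreInnerProductSpace.Core ℂ A :=
    { inner := fun a b => ψ (star a * b)
      conj_inner_symm := fun a b => state_conj_symm ψ hψ a b
      re_inner_nonneg := fun a => by
        have h := hψ a; rw [Complex.le_def] at h; simpa using h.1
      add_left := fun a b z => by simp [star_add, add_mul]
      smul_left := fun a b r => by
        simp [star_smul, Complex.star_def, smul_mul_assoc, _root_.map_smul, smul_eq_mul] }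
  letI : Inner ℂ A := InnerProductSpace.Core.toPreInner'
  have h := InnerProductSpace.Core.inner_mul_inner_self_le (𝕜 := ℂ) (F := A) x y
  have hxy : (inner ℂ x y : ℂ) = ψ (star x * y) := rfl
  have hyx : (inner ℂ y x : ℂ) = ψ (star y * x) := rfl
  have hxx : (inner ℂ x x : ℂ) = ψ (star x * x) := rfl
  have hyy : (inner ℂ y y : ℂ) = ψ (star y * y) := rfl
  rw [hxy, hyx, hxx, hyy] at h
  have hnorm : ‖ψ (star y * x)‖ = ‖ψ (star x * y)‖ := by
    rw [← state_conj_symm ψ hψ y x]; exact RCLike.norm_conj _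
  rw [hnorm] at h
  simpa [sq, RCLike.re_to_complex] using h

end Aux2

section Aux3
set_option linter.unusedSectionVars false
variable {A : Type*} [NormedRing A] [StarRing A] [CStarRing A]
    [NormedAlgebra ℂ A] [StarModule ℂ A] [CompleteSpace A]

lemma state_re_le_norm_sq (ψ : WeakDual ℂ A) (h1 : ψ 1 = 1)
    (hψ : ∀ x : A, 0 ≤ ψ (star x * x)) (x : A) :
    (ψ (star x * x)).re ≤ ‖x‖ ^ 2 := by
  letI : CStarAlgebra A := {}
  letI : PartialOrder A := CStarAlgebra.spectralOrder A
  letI : StarOrderedRing A := CStarAlgebra.spectralOrderedRing A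
  have key : star x * x ≤ algebraMap ℝ A (‖x‖ ^ 2) :=
    CStarAlgebra.star_mul_le_algebraMap_norm_sq
  rw [StarOrderedRing.le_iff] at key
  obtain ⟨p, hp, hxp⟩ := key
  have hcl : ∀ q ∈ AddSubmonoid.closure (Set.range fun s : A => star s * s),
      0 ≤ (ψ q).re := by
    intro q hq
    induction hq using AddSubmonoid.closure_induction with
    | mem z hz =>
      obtain ⟨s, rfl⟩ := hz
      have h := hψ s; rw [Complex.le_def] at h; simpa using h.1
    | zero => simp
    | add a b _ _ ha hb => simp only [map_add, Complex.add_re]; linarith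
  have hψp : 0 ≤ (ψ p).re := hcl p hp
  have heval : ψ (algebraMap ℝ A (‖x‖ ^ 2)) = (‖x‖ ^ 2 : ℂ) := by
    rw [Algebra.algebraMap_eq_smul_one, ← algebraMap_smul ℂ (‖x‖ ^ 2) (1 : A),
      _root_.map_smul, h1]
    simp [Complex.coe_algebraMap]
  have hre := congrArg Complex.re (congrArg ψ hxp)
  rw [heval] at hre
  simp only [map_add, Complex.add_re] at hre
  rw [← Complex.ofReal_pow, Complex.ofReal_re] at hre
  linarith

end Aux3


set_option maxHeartbeats 1000000 in
/-- **Absolute continuity of barycenters implies almost domination.**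
If `ρ₁, ρ₂` are barycenters of Borel probability measures `μ₁ ≪ μ₂` on the state space
of a unital C*-algebra, then for every sequence `(X n)` which is Cauchy for the seminorm
induced by `ρ₁`, `ρ₂ (Xₙ* Xₙ) → 0` implies `ρ₁ (Xₙ* Xₙ) → 0`. -/
theorem barycenter_absolutelyContinuous_almost_dominated
    {A : Type*} [NormedRing A] [StarRing A] [CStarRing A]
    [NormedAlgebra ℂ A] [StarModule ℂ A] [CompleteSpace A]
    (μ₁ μ₂ : Measure ↥(StateSpace A))
    [IsProbabilityMeasure μ₁] [IsProbabilityMeasure μ₂]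
    (ρ₁ ρ₂ : WeakDual ℂ A) (hρ₁ : ρ₁ ∈ StateSpace A) (hρ₂ : ρ₂ ∈ StateSpace A)
    (hbar₁ : ∀ X : A, ρ₁ X = ∫ φ, φ.1 X ∂μ₁)
    (hbar₂ : ∀ X : A, ρ₂ X = ∫ φ, φ.1 X ∂μ₂)
    (hac : μ₁ ≪ μ₂) (X : ℕ → A)
    (hCauchy : ∀ ε : ℝ, 0 < ε → ∃ N : ℕ, ∀ m n : ℕ, N ≤ m → N ≤ n →
      ρ₁ (star (X m - X n) * (X m - X n)) < (ε : ℂ))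
    (h₂ : Tendsto (fun n => ρ₂ (star (X n) * X n)) atTop (nhds 0)) :
    Tendsto (fun n => ρ₁ (star (X n) * X n)) atTop (nhds 0) := by
  -- basic facts about elements of the state space
  have hmeas : ∀ Y : A, Measurable fun φ : ↥(StateSpace A) => φ.1 Y := fun Y =>
    ((WeakDual.eval_continuous Y).comp continuous_subtype_val).measurable
  have hgmeas : ∀ Y : A, Measurable fun φ : ↥(StateSpace A) => (φ.1 Y).re := fun Y =>
    Complex.measurable_re.comp (hmeas Y)
  have hpos : ∀ (φ : ↥(StateSpace A)) (x : A), 0 ≤ (φ.1 (star x * x)).re := by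
    intro φ x; have h := φ.2.2 x; rw [Complex.le_def] at h; simpa using h.1
  have hbdd : ∀ (φ : ↥(StateSpace A)) (x : A), ‖φ.1 (star x * x)‖ ≤ ‖x‖ ^ 2 := by
    intro φ x
    have him := state_im_eq_zero φ.1 φ.2.2 x
    have hz : φ.1 (star x * x) = (((φ.1 (star x * x)).re : ℝ) : ℂ) :=
      Complex.ext rfl (by simpa using him)
    rw [hz, Complex.norm_real, Real.norm_eq_abs, abs_of_nonneg (hpos φ x)]
    exact state_re_le_norm_sq φ.1 φ.2.1 φ.2.2 x
  -- integrability
  have hintre : ∀ (μ : Measure ↥(StateSpace A)) [IsProbabilityMeasure μ] (x : A),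
      Integrable (fun φ : ↥(StateSpace A) => (φ.1 (star x * x)).re) μ := by
    intro μ _ x
    refine (integrable_const (‖x‖ ^ 2)).mono' (hgmeas _).aestronglyMeasurable
      (ae_of_all _ fun φ => ?_)
    rw [Real.norm_eq_abs, abs_of_nonneg (hpos φ x)]
    exact le_trans (Complex.re_le_norm _) (hbdd φ x)
  have hint : ∀ (μ : Measure ↥(StateSpace A)) [IsProbabilityMeasure μ] (x : A),
      Integrable (fun φ : ↥(StateSpace A) => φ.1 (star x * x)) μ := by
    intro μ _ x
    exact (integrable_const (‖x‖ ^ 2)).mono' (hmeas _).aestronglyMeasurable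
      (ae_of_all _ fun φ => hbdd φ x)
  -- lintegral identities
  have key : ∀ (μ : Measure ↥(StateSpace A)) [IsProbabilityMeasure μ],
      ∀ (ρ : WeakDual ℂ A), (∀ Y : A, ρ Y = ∫ φ, φ.1 Y ∂μ) → ∀ x : A,
      ∫⁻ φ, ENNReal.ofReal ((φ.1 (star x * x)).re) ∂μ
        = ENNReal.ofReal ((ρ (star x * x)).re) := by
    intro μ _ ρ hbar x
    rw [← ofReal_integral_eq_lintegral_ofReal (hintre μ x) (ae_of_all _ fun φ => hpos φ x)]
    congr 1
    have := integral_re (μ := μ) (f := fun φ : ↥(StateSpace A) => φ.1 (star x * x)) (hint μ x)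
    simp only [RCLike.re_to_complex] at this
    rw [this, hbar]
  -- μ₂-side: L¹ convergence and a.e.-convergent subsequence
  have hr₂ : Tendsto (fun n => (ρ₂ (star (X n) * X n)).re) atTop (𝓝 0) := by
    have := (Complex.continuous_re.tendsto 0).comp h₂
    simpa [Function.comp_def] using this
  have heLp : ∀ n, eLpNorm (fun φ : ↥(StateSpace A) => (φ.1 (star (X n) * X n)).re) 1 μ₂
      = ENNReal.ofReal ((ρ₂ (star (X n) * X n)).re) := by
    intro n
    rw [eLpNorm_one_eq_lintegral_enorm, ← key μ₂ ρ₂ hbar₂ (X n)]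
    exact lintegral_congr fun φ => (Real.enorm_eq_ofReal (hpos φ (X n)))
  have hTIM : TendstoInMeasure μ₂
      (fun n (φ : ↥(StateSpace A)) => (φ.1 (star (X n) * X n)).re) atTop 0 := by
    refine tendstoInMeasure_of_tendsto_eLpNorm (p := 1) one_ne_zero
      (fun n => (hgmeas _).aestronglyMeasurable) aestronglyMeasurable_const ?_
    have : ∀ n, (fun (φ : ↥(StateSpace A)) => (φ.1 (star (X n) * X n)).re) - 0
        = fun φ : ↥(StateSpace A) => (φ.1 (star (X n) * X n)).re := fun n => by
      ext φ; simp
    simp only [this, heLp]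
    have := ENNReal.tendsto_ofReal hr₂
    simpa using this
  obtain ⟨ns, hns, hae⟩ := hTIM.exists_seq_tendsto_ae
  have hae₁ : ∀ᵐ φ ∂μ₁, Tendsto (fun k => ((φ : ↥(StateSpace A)).1
      (star (X (ns k)) * X (ns k))).re) atTop (𝓝 0) := by
    refine (hae.mono fun φ h => ?_).filter_mono hac.ae_le
    simpa using h
  -- main real convergence
  have hr₁ : Tendsto (fun n => (ρ₁ (star (X n) * X n)).re) atTop (𝓝 0) := by
    rw [Metric.tendsto_atTop]
    intro ε hε
    obtain ⟨N, hN⟩ := hCauchy (ε / 2) (by positivity)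
    refine ⟨N, fun m hm => ?_⟩
    have hmain : (ρ₁ (star (X m) * X m)).re ≤ ε / 2 := by
      -- a.e. pointwise convergence of the regularized sequence
      have haeT : ∀ᵐ φ ∂μ₁, Tendsto
          (fun k => ((φ : ↥(StateSpace A)).1
            (star (X m - X (ns k)) * (X m - X (ns k)))).re) atTop
          (𝓝 ((φ : ↥(StateSpace A)).1 (star (X m) * X m)).re) := by
        filter_upwards [hae₁] with φ hφ
        have hkey : ∀ k, |(φ.1 (star (X m - X (ns k)) * (X m - X (ns k)))).re
            - (φ.1 (star (X m) * X m)).re|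
            ≤ 2 * Real.sqrt ((φ.1 (star (X m) * X m)).re
                * (φ.1 (star (X (ns k)) * X (ns k))).re)
              + (φ.1 (star (X (ns k)) * X (ns k))).re := by
          intro k
          have hexp : φ.1 (star (X m - X (ns k)) * (X m - X (ns k)))
              = φ.1 (star (X m) * X m) - φ.1 (star (X m) * X (ns k))
                - φ.1 (star (X (ns k)) * X m) + φ.1 (star (X (ns k)) * X (ns k)) := by
            have e : star (X m - X (ns k)) * (X m - X (ns k))
                = star (X m) * X m - star (X m) * X (ns k)
                  - star (X (ns k)) * X m + star (X (ns k)) * X (ns k) := by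
              simp only [star_sub]; noncomm_ring
            rw [e]; simp
          have hre : (φ.1 (star (X (ns k)) * X m)).re = (φ.1 (star (X m) * X (ns k))).re := by
            rw [← state_conj_symm φ.1 φ.2.2 (X m) (X (ns k))]
            exact Complex.conj_re _
          have hcs : ‖φ.1 (star (X m) * X (ns k))‖
              ≤ Real.sqrt ((φ.1 (star (X m) * X m)).re
                * (φ.1 (star (X (ns k)) * X (ns k))).re) := by
            have h2 := state_cauchy_schwarz φ.1 φ.2.2 (X m) (X (ns k))
            have := Real.sqrt_le_sqrt h2
            rwa [Real.sqrt_sq (norm_nonneg _)] at this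
          have habs : |(φ.1 (star (X m) * X (ns k))).re|
              ≤ ‖φ.1 (star (X m) * X (ns k))‖ := Complex.abs_re_le_norm _
          have hdiff : (φ.1 (star (X m - X (ns k)) * (X m - X (ns k)))).re
              - (φ.1 (star (X m) * X m)).re
              = (φ.1 (star (X (ns k)) * X (ns k))).re
                - 2 * (φ.1 (star (X m) * X (ns k))).re := by
            rw [hexp]; simp only [Complex.add_re, Complex.sub_re, hre]; ring
          rw [hdiff]
          have h3 : |(φ.1 (star (X (ns k)) * X (ns k))).re
              - 2 * (φ.1 (star (X m) * X (ns k))).re|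
              ≤ (φ.1 (star (X (ns k)) * X (ns k))).re
                + 2 * |(φ.1 (star (X m) * X (ns k))).re| := by
            have := abs_sub ((φ.1 (star (X (ns k)) * X (ns k))).re)
              (2 * (φ.1 (star (X m) * X (ns k))).re)
            calc |(φ.1 (star (X (ns k)) * X (ns k))).re
                - 2 * (φ.1 (star (X m) * X (ns k))).re|
                ≤ |(φ.1 (star (X (ns k)) * X (ns k))).re|
                  + |2 * (φ.1 (star (X m) * X (ns k))).re| := abs_sub _ _
              _ = (φ.1 (star (X (ns k)) * X (ns k))).re
                  + 2 * |(φ.1 (star (X m) * X (ns k))).re| := by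
                  rw [abs_of_nonneg (hpos φ _), abs_mul, abs_of_nonneg (by norm_num : (0:ℝ) ≤ 2)]
          refine le_trans h3 ?_
          have := le_trans habs hcs
          linarith
        have hb : Tendsto (fun k => 2 * Real.sqrt ((φ.1 (star (X m) * X m)).re
            * (φ.1 (star (X (ns k)) * X (ns k))).re)
            + (φ.1 (star (X (ns k)) * X (ns k))).re) atTop (𝓝 0) := by
          have h1 : Tendsto (fun k => (φ.1 (star (X m) * X m)).re
              * (φ.1 (star (X (ns k)) * X (ns k))).re) atTop (𝓝 0) := by
            have := tendsto_const_nhds (x := (φ.1 (star (X m) * X m)).re)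
              (f := atTop (α := ℕ)) |>.mul hφ
            simpa using this
          have h2 : Tendsto (fun k => Real.sqrt ((φ.1 (star (X m) * X m)).re
              * (φ.1 (star (X (ns k)) * X (ns k))).re)) atTop (𝓝 0) := by
            have := (Real.continuous_sqrt.tendsto 0).comp h1
            simpa [Function.comp_def] using this
          have := (h2.const_mul 2).add hφ
          simpa using this
        have hzero : Tendsto (fun k => (φ.1 (star (X m - X (ns k)) * (X m - X (ns k)))).re
            - (φ.1 (star (X m) * X m)).re) atTop (𝓝 0) := by
          refine squeeze_zero_norm (fun k => ?_) hb
          rw [Real.norm_eq_abs]; exact hkey k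
        have h4 := hzero.add_const ((φ.1 (star (X m) * X m)).re)
        rw [zero_add] at h4
        exact h4.congr fun k => sub_add_cancel _ _
      -- Fatou
      have hbound : ∀ k, N ≤ ns k →
          ∫⁻ φ : ↥(StateSpace A), ENNReal.ofReal
            ((φ.1 (star (X m - X (ns k)) * (X m - X (ns k)))).re) ∂μ₁
            ≤ ENNReal.ofReal (ε / 2) := by
        intro k hk
        rw [key μ₁ ρ₁ hbar₁]
        apply ENNReal.ofReal_le_ofReal
        have h := hN m (ns k) hm hk
        rw [Complex.lt_def] at h
        exact le_of_lt (by simpa using h.1)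
      have hfatou : ENNReal.ofReal ((ρ₁ (star (X m) * X m)).re)
          ≤ ENNReal.ofReal (ε / 2) := by
        rw [← key μ₁ ρ₁ hbar₁ (X m)]
        have hcongr : ∫⁻ φ : ↥(StateSpace A),
            ENNReal.ofReal ((φ.1 (star (X m) * X m)).re) ∂μ₁
            = ∫⁻ φ : ↥(StateSpace A), liminf (fun k => ENNReal.ofReal
              ((φ.1 (star (X m - X (ns k)) * (X m - X (ns k)))).re)) atTop ∂μ₁ := by
          refine lintegral_congr_ae ?_
          filter_upwards [haeT] with φ hφ
          exact ((ENNReal.tendsto_ofReal hφ).liminf_eq).symm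
        rw [hcongr]
        refine le_trans (lintegral_liminf_le fun k =>
          ENNReal.measurable_ofReal.comp (hgmeas _)) ?_
        refine liminf_le_of_frequently_le' ?_
        refine (eventually_atTop.2 ⟨N, fun k hk => hbound k (le_trans hk hns.le_apply)⟩).frequently
      exact (ENNReal.ofReal_le_ofReal_iff (by positivity)).1 hfatou
    have hnn : 0 ≤ (ρ₁ (star (X m) * X m)).re := by
      have h := hρ₁.2 (X m); rw [Complex.le_def] at h; simpa using h.1
    rw [Real.dist_eq, sub_zero, abs_of_nonneg hnn]
    linarith
  -- back to complex convergence
  have him : ∀ n, ρ₁ (star (X n) * X n) = (((ρ₁ (star (X n) * X n)).re : ℝ) : ℂ) := by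
    intro n
    have h := hρ₁.2 (X n); rw [Complex.le_def] at h
    exact Complex.ext rfl (by simpa using h.2.symm)
  have hfin : Tendsto (fun n => (((ρ₁ (star (X n) * X n)).re : ℝ) : ℂ)) atTop (𝓝 0) := by
    have := (Complex.continuous_ofReal.tendsto 0).comp hr₁
    simpa [Function.comp_def] using this
  exact hfin.congr fun n => (him n).symm
end

section
/- Let A be a unital C*-algebra over ℂ with state space S (continuous linear functionals φ : A → ℂ with φ(1) = 1 and φ(x* x) real and nonnegative for all x), equipped with the weak-* topology and its Borel σ-algebra. Let μ be a Borel probability measure on S and let ρ be a state that is the barycenter of μ, i.e. ρ(Z) = ∫_S φ(Z) dμ(φ) for all Z ∈ A. Then for all X, Y ∈ A: ( ∫_S |φ(X* X) − φ(Y* Y)| dμ(φ) )² ≤ 2 ρ(X* X + Y* Y) · ρ((X − Y)*(X − Y)). -/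
open MeasureTheory
open scoped ComplexOrder

section Aux

variable {A : Type*} [Ring A] [StarRing A] [Module ℂ A] [TopologicalSpace A]
  [StarModule ℂ A] [SMulCommClass ℂ A A] [IsScalarTower ℂ A A]

lemma StateSpace.im_eq_zero {φ : WeakDual ℂ A} (hφ : φ ∈ StateSpace A) (x : A) :
    (φ (star x * x)).im = 0 := by
  have := (Complex.le_def.mp (hφ.2 x)).2
  simpa using this.symm

lemma StateSpace.re_nonneg {φ : WeakDual ℂ A} (hφ : φ ∈ StateSpace A) (x : A) :
    0 ≤ (φ (star x * x)).re := by
  have := (Complex.le_def.mp (hφ.2 x)).1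
  simpa using this

lemma StateSpace.expand {φ : WeakDual ℂ A} (u v : A) :
    φ (star (u + v) * (u + v)) =
      φ (star u * u) + φ (star u * v) + φ (star v * u) + φ (star v * v) := by
  have : star (u + v) * (u + v) =
      star u * u + star u * v + star v * u + star v * v := by
    rw [star_add]; noncomm_ring
  rw [this, map_add, map_add, map_add]

/-- Hermitian symmetry of the GNS form of a state. -/
lemma StateSpace.herm {φ : WeakDual ℂ A} (hφ : φ ∈ StateSpace A) (a b : A) :
    φ (star b * a) = starRingEnd ℂ (φ (star a * b)) := by
  set z := φ (star a * b) with hz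
  set w := φ (star b * a) with hw
  -- first polarization identity: Im (z + w) = 0
  have h1 : (z + w).im = 0 := by
    have e := StateSpace.expand (φ := φ) a b
    have h := congrArg Complex.im e
    simp only [Complex.add_im] at h
    rw [StateSpace.im_eq_zero hφ (a + b), StateSpace.im_eq_zero hφ a,
      StateSpace.im_eq_zero hφ b] at h
    simp only [Complex.add_im]
    linarith
  -- second polarization identity with `I • b`: Re (z - w) = 0
  have h2 : z.re = w.re := by
    have e := StateSpace.expand (φ := φ) a ((Complex.I : ℂ) • b)
    have e1 : φ (star a * ((Complex.I : ℂ) • b)) = Complex.I * z := by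
      rw [mul_smul_comm, _root_.map_smul, smul_eq_mul]
    have e2 : φ (star ((Complex.I : ℂ) • b) * a) = -Complex.I * w := by
      rw [star_smul, smul_mul_assoc, _root_.map_smul]
      simp [Complex.conj_I]
      exact hw.symm
    have e3 : φ (star ((Complex.I : ℂ) • b) * ((Complex.I : ℂ) • b)) = φ (star b * b) := by
      rw [star_smul, smul_mul_assoc, mul_smul_comm, smul_smul, _root_.map_smul]
      simp [Complex.conj_I]
    rw [e1, e2, e3] at e
    have h := congrArg Complex.im e
    rw [StateSpace.im_eq_zero hφ (a + (Complex.I : ℂ) • b)] at h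
    simp only [Complex.add_im, Complex.mul_im, Complex.I_re, Complex.I_im,
      Complex.neg_im, Complex.neg_re, StateSpace.im_eq_zero hφ a,
      StateSpace.im_eq_zero hφ b] at h
    linarith
  simp only [Complex.add_im] at h1
  apply Complex.ext
  · rw [Complex.conj_re]; exact h2.symm
  · rw [Complex.conj_im]; linarith

/-- Cauchy–Schwarz inequality for states. -/
lemma StateSpace.cauchy_schwarz {φ : WeakDual ℂ A} (hφ : φ ∈ StateSpace A) (a b : A) :
    ‖φ (star a * b)‖ ^ 2 ≤ (φ (star a * a)).re * (φ (star b * b)).re := by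
  set z := φ (star a * b) with hz
  have hsq : ‖z‖ ^ 2 = Complex.normSq z := by
    rw [Complex.sq_norm]
  by_cases hz0 : z = 0
  · rw [hz0]
    simpa using mul_nonneg (StateSpace.re_nonneg hφ a) (StateSpace.re_nonneg hφ b)
  -- quadratic in t
  have key : ∀ t : ℝ,
      0 ≤ Complex.normSq z * (φ (star b * b)).re * (t * t)
        + (2 * Complex.normSq z) * t + (φ (star a * a)).re := by
    intro t
    set s : ℂ := (t : ℂ) * (starRingEnd ℂ z) with hs
    have e := StateSpace.expand (φ := φ) a (s • b)
    have e1 : φ (star a * (s • b)) = s * z := by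
      rw [mul_smul_comm, _root_.map_smul, smul_eq_mul]
    have e2 : φ (star (s • b) * a) = starRingEnd ℂ s * starRingEnd ℂ z := by
      rw [star_smul, smul_mul_assoc, _root_.map_smul, StateSpace.herm hφ a b]
      rfl
    have e3 : φ (star (s • b) * (s • b)) = (starRingEnd ℂ s * s) * φ (star b * b) := by
      rw [star_smul, smul_mul_assoc, mul_smul_comm, smul_smul, _root_.map_smul, smul_eq_mul,
        Complex.star_def]
    rw [e1, e2, e3] at e
    have hre := StateSpace.re_nonneg hφ (a + s • b)
    rw [e] at hre
    have hsz : s * z = ((t * Complex.normSq z : ℝ) : ℂ) := by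
      have h' : s * z = (t : ℂ) * (z * starRingEnd ℂ z) := by rw [hs]; ring
      rw [h', Complex.mul_conj]; push_cast; ring
    have hsz' : starRingEnd ℂ s * starRingEnd ℂ z = ((t * Complex.normSq z : ℝ) : ℂ) := by
      rw [← map_mul, hsz, Complex.conj_ofReal]
    have hss : starRingEnd ℂ s * s = ((t * t * Complex.normSq z : ℝ) : ℂ) := by
      have h' : starRingEnd ℂ s * s = (t : ℂ) * (t : ℂ) * (z * starRingEnd ℂ z) := by
        rw [hs, map_mul, Complex.conj_conj, Complex.conj_ofReal]; ring
      rw [h', Complex.mul_conj]; push_cast; ring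
    rw [hsz, hsz', hss] at hre
    simp only [Complex.add_re, Complex.ofReal_re, Complex.mul_re, Complex.ofReal_im,
      StateSpace.im_eq_zero hφ b] at hre
    nlinarith [hre]
  have hd := discrim_le_zero key
  rw [discrim] at hd
  have hnsq : 0 < Complex.normSq z := Complex.normSq_pos.mpr hz0
  rw [hsq]
  nlinarith [hd, hnsq]

/-- The key pointwise estimate. -/
lemma StateSpace.pointwise_estimate {φ : WeakDual ℂ A} (hφ : φ ∈ StateSpace A) (x y : A) :
    |(φ (star x * x)).re - (φ (star y * y)).re| ≤
      Real.sqrt ((φ (star (x - y) * (x - y))).re) *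
        (Real.sqrt ((φ (star x * x)).re) + Real.sqrt ((φ (star y * y)).re)) := by
  set d := x - y with hd
  have key : star x * x - star y * y = star x * d + star d * y := by
    rw [hd]; simp only [star_sub, sub_mul, mul_sub]; abel
  have hsplit : (φ (star x * x)).re - (φ (star y * y)).re
      = (φ (star x * d)).re + (φ (star d * y)).re := by
    have : φ (star x * x) - φ (star y * y) = φ (star x * d) + φ (star d * y) := by
      rw [← map_add, ← key, map_sub]
    have := congrArg Complex.re this
    simpa using this
  have csab : ∀ u v : A, ‖φ (star u * v)‖ ≤
      Real.sqrt ((φ (star u * u)).re) * Real.sqrt ((φ (star v * v)).re) := by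
    intro u v
    have h2 := Real.sqrt_le_sqrt (StateSpace.cauchy_schwarz hφ u v)
    rwa [Real.sqrt_sq (norm_nonneg _), Real.sqrt_mul (StateSpace.re_nonneg hφ u)] at h2
  calc |(φ (star x * x)).re - (φ (star y * y)).re|
      = |(φ (star x * d)).re + (φ (star d * y)).re| := by rw [hsplit]
    _ ≤ ‖φ (star x * d)‖ + ‖φ (star d * y)‖ := by
        refine (abs_add_le _ _).trans (add_le_add ?_ ?_) <;>
          simpa using Complex.abs_re_le_norm _
    _ ≤ Real.sqrt ((φ (star x * x)).re) * Real.sqrt ((φ (star d * d)).re)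
        + Real.sqrt ((φ (star d * d)).re) * Real.sqrt ((φ (star y * y)).re) :=
        add_le_add (csab x d) (csab d y)
    _ = Real.sqrt ((φ (star d * d)).re) *
        (Real.sqrt ((φ (star x * x)).re) + Real.sqrt ((φ (star y * y)).re)) := by ring

end Aux

/-- **The L¹ Cauchy estimate for randomized states.**
If `ρ` is the barycenter of the Borel probability measure `μ` on the state space of a
unital C*-algebra, then for all `X Y`:
`(∫ |φ(X*X) − φ(Y*Y)| dμ(φ))² ≤ 2 ρ(X*X + Y*Y) ρ((X−Y)*(X−Y))`. -/
theorem barycenter_L1_cauchy_estimate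
    {A : Type*} [NormedRing A] [StarRing A] [CStarRing A]
    [NormedAlgebra ℂ A] [StarModule ℂ A] [CompleteSpace A]
    (μ : Measure ↥(StateSpace A)) [IsProbabilityMeasure μ]
    (ρ : WeakDual ℂ A) (hρ : ρ ∈ StateSpace A)
    (hbar : ∀ Z : A, ρ Z = ∫ φ, φ.1 Z ∂μ) (X Y : A) :
    (∫ φ, |(φ.1 (star X * X)).re - (φ.1 (star Y * Y)).re| ∂μ) ^ 2 ≤
      2 * (ρ (star X * X + star Y * Y)).re * (ρ (star (X - Y) * (X - Y))).re := by
  letI : CStarAlgebra A := ⟨⟩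
  letI : PartialOrder A := CStarAlgebra.spectralOrder A
  letI : StarOrderedRing A := CStarAlgebra.spectralOrderedRing A
  haveI : BorelSpace ↥(StateSpace A) := ⟨rfl⟩
  set D : A := X - Y with hD
  -- states are nonnegative on nonnegative elements
  have hpos : ∀ (φ : WeakDual ℂ A), φ ∈ StateSpace A → ∀ a : A, 0 ≤ a → 0 ≤ φ a := by
    intro φ hφ a ha
    rw [StarOrderedRing.nonneg_iff] at ha
    induction ha using AddSubmonoid.closure_induction with
    | mem x hx => obtain ⟨s, rfl⟩ := hx; exact hφ.2 s
    | zero => simp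
    | add x y _ _ hx hy => rw [map_add]; exact add_nonneg hx hy
  -- uniform bound on states at positive elements
  have hbd : ∀ (Z : A) (φ : ↥(StateSpace A)), (φ.1 (star Z * Z)).re ≤ ‖star Z * Z‖ := by
    intro Z φ
    have hle : star Z * Z ≤ algebraMap ℝ A ‖star Z * Z‖ :=
      IsSelfAdjoint.le_algebraMap_norm_self (IsSelfAdjoint.star_mul_self Z)
    have h0 : 0 ≤ φ.1 (algebraMap ℝ A ‖star Z * Z‖ - star Z * Z) :=
      hpos _ φ.2 _ (sub_nonneg.mpr hle)
    have hone : φ.1 (algebraMap ℝ A ‖star Z * Z‖) = ((‖star Z * Z‖ : ℝ) : ℂ) := by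
      rw [IsScalarTower.algebraMap_apply ℝ ℂ A, Algebra.algebraMap_eq_smul_one,
        _root_.map_smul, φ.2.1, smul_eq_mul, mul_one, Complex.coe_algebraMap]
    rw [map_sub, hone] at h0
    have := (Complex.le_def.mp h0).1
    simp only [Complex.zero_re, Complex.sub_re, Complex.ofReal_re] at this
    linarith
  -- continuity of evaluations
  have hcont : ∀ Z : A, Continuous (fun φ : ↥(StateSpace A) => (φ.1 Z).re) := fun Z =>
    Complex.continuous_re.comp ((WeakDual.eval_continuous Z).comp continuous_subtype_val)
  -- integrability of bounded measurable functions
  have hIntAux : ∀ (F : ↥(StateSpace A) → ℝ) (C : ℝ), Continuous F → (∀ φ, ‖F φ‖ ≤ C) →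
      Integrable F μ := fun F C hc hb =>
    memLp_one_iff_integrable.mp (MemLp.of_bound hc.aestronglyMeasurable C (ae_of_all _ hb))
  have hL2Aux : ∀ (F : ↥(StateSpace A) → ℝ) (C : ℝ), Continuous F → (∀ φ, ‖F φ‖ ≤ C) →
      MemLp F (ENNReal.ofReal 2) μ := fun F C hc hb =>
    MemLp.of_bound hc.aestronglyMeasurable C (ae_of_all _ hb)
  -- notation
  have hrenn : ∀ (Z : A) (φ : ↥(StateSpace A)), 0 ≤ (φ.1 (star Z * Z)).re := fun Z φ =>
    StateSpace.re_nonneg φ.2 Z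
  have hnormbd : ∀ (Z : A) (φ : ↥(StateSpace A)), ‖(φ.1 (star Z * Z)).re‖ ≤ ‖star Z * Z‖ := by
    intro Z φ
    rw [Real.norm_eq_abs, abs_of_nonneg (hrenn Z φ)]
    exact hbd Z φ
  have hint : ∀ Z : A, Integrable (fun φ : ↥(StateSpace A) => (φ.1 (star Z * Z)).re) μ :=
    fun Z => hIntAux _ ‖star Z * Z‖ (hcont _) (hnormbd Z)
  set f : ↥(StateSpace A) → ℝ := fun φ => Real.sqrt ((φ.1 (star D * D)).re) with hf
  set g : ↥(StateSpace A) → ℝ := fun φ =>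
    Real.sqrt ((φ.1 (star X * X)).re) + Real.sqrt ((φ.1 (star Y * Y)).re) with hg
  have hcf : Continuous f := Real.continuous_sqrt.comp (hcont _)
  have hcg : Continuous g :=
    (Real.continuous_sqrt.comp (hcont _)).add (Real.continuous_sqrt.comp (hcont _))
  have hf0 : ∀ φ, 0 ≤ f φ := fun φ => Real.sqrt_nonneg _
  have hg0 : ∀ φ, 0 ≤ g φ := fun φ => add_nonneg (Real.sqrt_nonneg _) (Real.sqrt_nonneg _)
  have hfbd : ∀ φ, ‖f φ‖ ≤ Real.sqrt ‖star D * D‖ := by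
    intro φ
    rw [Real.norm_eq_abs, abs_of_nonneg (hf0 φ)]
    exact Real.sqrt_le_sqrt (hbd D φ)
  have hgbd : ∀ φ, ‖g φ‖ ≤ Real.sqrt ‖star X * X‖ + Real.sqrt ‖star Y * Y‖ := by
    intro φ
    rw [Real.norm_eq_abs, abs_of_nonneg (hg0 φ)]
    exact add_le_add (Real.sqrt_le_sqrt (hbd X φ)) (Real.sqrt_le_sqrt (hbd Y φ))
  have hfL2 : MemLp f (ENNReal.ofReal 2) μ := hL2Aux f _ hcf hfbd
  have hgL2 : MemLp g (ENNReal.ofReal 2) μ := hL2Aux g _ hcg hgbd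
  -- barycenter identity for positive elements
  have hkey : ∀ Z : A, (ρ (star Z * Z)).re = ∫ φ, (φ.1 (star Z * Z)).re ∂μ := by
    intro Z
    have h1 : (fun φ : ↥(StateSpace A) => φ.1 (star Z * Z)) =
        fun φ => (((φ.1 (star Z * Z)).re : ℝ) : ℂ) := by
      funext φ
      apply Complex.ext
      · simp
      · simp [StateSpace.im_eq_zero φ.2 Z]
    have hintC : Integrable (fun φ : ↥(StateSpace A) => φ.1 (star Z * Z)) μ := by
      rw [h1]; exact (hint Z).ofReal
    calc (ρ (star Z * Z)).re
        = RCLike.re (∫ φ, φ.1 (star Z * Z) ∂μ) := by rw [hbar, RCLike.re_to_complex]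
      _ = ∫ φ, RCLike.re (φ.1 (star Z * Z)) ∂μ := (integral_re hintC).symm
      _ = ∫ φ, (φ.1 (star Z * Z)).re ∂μ := by simp [RCLike.re_to_complex]
  -- Step A : pointwise estimate integrated
  have hfgInt : Integrable (fun φ => f φ * g φ) μ :=
    hIntAux _ (Real.sqrt ‖star D * D‖ * (Real.sqrt ‖star X * X‖ + Real.sqrt ‖star Y * Y‖))
      (hcf.mul hcg) (fun φ => by
        rw [Real.norm_eq_abs, abs_of_nonneg (mul_nonneg (hf0 φ) (hg0 φ))]
        exact mul_le_mul ((Real.norm_eq_abs _ ▸ abs_of_nonneg (hf0 φ)) ▸ hfbd φ)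
          ((Real.norm_eq_abs _ ▸ abs_of_nonneg (hg0 φ)) ▸ hgbd φ) (hg0 φ) (Real.sqrt_nonneg _))
  have hstepA : (∫ φ, |(φ.1 (star X * X)).re - (φ.1 (star Y * Y)).re| ∂μ) ≤
      ∫ φ, f φ * g φ ∂μ := by
    refine integral_mono ((hint X).sub (hint Y)).abs hfgInt (fun φ => ?_)
    exact StateSpace.pointwise_estimate φ.2 X Y
  -- Step B : Cauchy-Schwarz in L²
  have hpq : Real.HolderConjugate 2 2 := Real.HolderConjugate.two_two
  have hCS := integral_mul_le_Lp_mul_Lq_of_nonneg (μ := μ) hpq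
    (ae_of_all _ hf0) (ae_of_all _ hg0) hfL2 hgL2
  have hrpow : ∀ F : ↥(StateSpace A) → ℝ, (fun φ => F φ ^ (2 : ℝ)) = fun φ => F φ ^ (2 : ℕ) := by
    intro F; funext φ
    rw [show (2 : ℝ) = ((2 : ℕ) : ℝ) by norm_num, Real.rpow_natCast]
  rw [hrpow f, hrpow g] at hCS
  -- identify ∫ f² and bound ∫ g²
  have hf2int : Integrable (fun φ => f φ ^ (2 : ℕ)) μ := by
    have : (fun φ => f φ ^ (2 : ℕ)) = fun φ : ↥(StateSpace A) => (φ.1 (star D * D)).re := by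
      funext φ; rw [sq, hf, Real.mul_self_sqrt (hrenn D φ)]
    rw [this]; exact hint D
  have hf2 : (∫ φ, f φ ^ (2 : ℕ) ∂μ) = (ρ (star D * D)).re := by
    rw [hkey D]
    congr 1; funext φ
    rw [sq, hf, Real.mul_self_sqrt (hrenn D φ)]
  have hg2int : Integrable (fun φ => g φ ^ (2 : ℕ)) μ :=
    hIntAux _ ((Real.sqrt ‖star X * X‖ + Real.sqrt ‖star Y * Y‖) ^ 2) (hcg.pow 2)
      (fun φ => by
        rw [Real.norm_eq_abs, abs_of_nonneg (pow_nonneg (hg0 φ) 2)]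
        exact pow_le_pow_left₀ (hg0 φ) ((Real.norm_eq_abs _ ▸ abs_of_nonneg (hg0 φ)) ▸ hgbd φ) 2)
  have hg2 : (∫ φ, g φ ^ (2 : ℕ) ∂μ) ≤
      2 * ((ρ (star X * X)).re + (ρ (star Y * Y)).re) := by
    have hmono : (∫ φ, g φ ^ (2 : ℕ) ∂μ) ≤
        ∫ φ, 2 * ((φ.1 (star X * X)).re + (φ.1 (star Y * Y)).re) ∂μ := by
      refine integral_mono hg2int (((hint X).add (hint Y)).const_mul 2) (fun φ => ?_)
      have h1 := Real.sq_sqrt (hrenn X φ)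
      have h2 := Real.sq_sqrt (hrenn Y φ)
      have h3 := sq_nonneg (Real.sqrt ((φ.1 (star X * X)).re) - Real.sqrt ((φ.1 (star Y * Y)).re))
      simp only [hg]
      nlinarith
    rw [integral_const_mul, integral_add (hint X) (hint Y), ← hkey X, ← hkey Y] at hmono
    exact hmono
  -- nonnegativity facts
  have hIf2 : 0 ≤ ∫ φ, f φ ^ (2 : ℕ) ∂μ := integral_nonneg (fun φ => sq_nonneg _)
  have hIg2 : 0 ≤ ∫ φ, g φ ^ (2 : ℕ) ∂μ := integral_nonneg (fun φ => sq_nonneg _)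
  have hIabs : 0 ≤ ∫ φ, |(φ.1 (star X * X)).re - (φ.1 (star Y * Y)).re| ∂μ :=
    integral_nonneg (fun φ => abs_nonneg _)
  -- put everything together
  have hsq : (∫ φ, |(φ.1 (star X * X)).re - (φ.1 (star Y * Y)).re| ∂μ) ^ 2 ≤
      (∫ φ, f φ ^ (2 : ℕ) ∂μ) * (∫ φ, g φ ^ (2 : ℕ) ∂μ) := by
    calc (∫ φ, |(φ.1 (star X * X)).re - (φ.1 (star Y * Y)).re| ∂μ) ^ 2
        ≤ (∫ φ, f φ * g φ ∂μ) ^ 2 := pow_le_pow_left₀ hIabs hstepA 2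
      _ ≤ ((∫ φ, f φ ^ (2 : ℕ) ∂μ) ^ ((1 : ℝ) / 2) *
            (∫ φ, g φ ^ (2 : ℕ) ∂μ) ^ ((1 : ℝ) / 2)) ^ 2 :=
          pow_le_pow_left₀ (integral_nonneg (fun φ => mul_nonneg (hf0 φ) (hg0 φ))) hCS 2
      _ = (∫ φ, f φ ^ (2 : ℕ) ∂μ) * (∫ φ, g φ ^ (2 : ℕ) ∂μ) := by
          rw [mul_pow, ← Real.rpow_natCast ((∫ φ, f φ ^ (2 : ℕ) ∂μ) ^ ((1 : ℝ) / 2)) 2,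
            ← Real.rpow_natCast ((∫ φ, g φ ^ (2 : ℕ) ∂μ) ^ ((1 : ℝ) / 2)) 2,
            ← Real.rpow_mul hIf2, ← Real.rpow_mul hIg2]
          norm_num
  have hρD : 0 ≤ (ρ (star D * D)).re := StateSpace.re_nonneg hρ D
  have hfinal : (∫ φ, f φ ^ (2 : ℕ) ∂μ) * (∫ φ, g φ ^ (2 : ℕ) ∂μ) ≤
      (ρ (star D * D)).re * (2 * ((ρ (star X * X)).re + (ρ (star Y * Y)).re)) := by
    rw [hf2]
    exact mul_le_mul_of_nonneg_left hg2 hρD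
  have hsum : (ρ (star X * X + star Y * Y)).re = (ρ (star X * X)).re + (ρ (star Y * Y)).re := by
    rw [map_add, Complex.add_re]
  calc (∫ φ, |(φ.1 (star X * X)).re - (φ.1 (star Y * Y)).re| ∂μ) ^ 2
      ≤ (∫ φ, f φ ^ (2 : ℕ) ∂μ) * (∫ φ, g φ ^ (2 : ℕ) ∂μ) := hsq
    _ ≤ (ρ (star D * D)).re * (2 * ((ρ (star X * X)).re + (ρ (star Y * Y)).re)) := hfinal
    _ = 2 * (ρ (star X * X + star Y * Y)).re * (ρ (star D * D)).re := by rw [hsum]; ring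
end
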